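/- The number of ordered pairs (X,Y) of subsets of [n] with X ≤ Y in P_n (i.e., |X| = |Y| and, writing X = {x_1 < ⋯ < x_k}, Y = {y_1 < ⋯ < y_k}, x_i ≤ y_i for all i) equals the (n+1)-st Catalan number. -/

import Mathlib

open List DyckStep

/-- `X ≤ Y` in the poset `Pₙ`: writing `X = {x₁ < ⋯ < x_k}` and `Y = {y₁ < ⋯ < y_l}`,
we require `k = l` and `xᵢ ≤ yᵢ` for all `i` (encoded via `List.Forall₂` on the
sorted enumerations, which forces in particular `|X| = |Y|`). -/
def Ple {α : Type*} [LinearOrder α] (X Y : Finset α) : Prop :=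
  List.Forall₂ (· ≤ ·) (X.sort (· ≤ ·)) (Y.sort (· ≤ ·))

section Helpers

/-- Encode one element's memberships as two Dyck steps. -/
private def pairSteps : Bool × Bool → List DyckStep
  | (true, false) => [U, U]
  | (false, true) => [D, D]
  | (false, false) => [U, D]
  | (true, true) => [D, U]

private lemma pairSteps_length (p : Bool × Bool) : (pairSteps p).length = 2 := by
  rcases p with ⟨_|_, _|_⟩ <;> rfl

private lemma pairSteps_injective : Function.Injective pairSteps := by decide

private lemma length_flatMap_pairSteps (l : List (Bool × Bool)) :
    (l.flatMap pairSteps).length = 2 * l.length := by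
  induction l with
  | nil => simp
  | cons p l ih => simp [List.flatMap_cons, ih, pairSteps_length]; ring

/-- prefix ballot condition with slack `k` -/
private def Bal (k : ℕ) (l : List (Bool × Bool)) : Prop :=
  ∀ t, (l.take t).countP (fun q => q.2) ≤ (l.take t).countP (fun q => q.1) + k

/-- Dyck prefix condition with slack `2k+1` -/
private def Qd (k : ℕ) (v : List DyckStep) : Prop :=
  ∀ i, (v.take i).count D ≤ (v.take i).count U + (2 * k + 1)

private lemma bal_tail {k : ℕ} {p : Bool × Bool} {l : List (Bool × Bool)} (h : Bal k (p :: l)) :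
    Bal (k + (if p.1 then 1 else 0) - (if p.2 then 1 else 0)) l := by
  intro t
  have h0 := h 1
  have ht := h (t + 1)
  simp only [take_succ_cons, countP_cons] at h0 ht ⊢
  rcases p with ⟨_|_, _|_⟩ <;> simp_all <;> omega

private lemma bal_slack {k : ℕ} {p : Bool × Bool} {l : List (Bool × Bool)} (h : Bal k (p :: l)) :
    (if p.2 then 1 else 0) ≤ k + (if p.1 then 1 else 0) := by
  have h0 := h 1
  simp only [take_succ_cons, countP_cons] at h0
  rcases p with ⟨_|_, _|_⟩ <;> simp_all

/-- totals -/
private lemma totals_flatMap (l : List (Bool × Bool)) :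
    (l.flatMap pairSteps).count U + 2 * l.countP (fun q => q.2)
      = (l.flatMap pairSteps).count D + 2 * l.countP (fun q => q.1) := by
  induction l with
  | nil => simp
  | cons p l ih =>
    simp only [List.flatMap_cons, count_append, countP_cons]
    rcases p with ⟨_|_, _|_⟩ <;> simp only [pairSteps, count_cons, count_nil] <;> simp <;> omega

private lemma encode_Qd : ∀ (l : List (Bool × Bool)) (k : ℕ), Bal k l →
    Qd k (l.flatMap pairSteps) := by
  intro l
  induction l with
  | nil => intro k _ i; simp
  | cons p l ih =>
    intro k hb i
    have hs := bal_slack hb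
    have ht := ih _ (bal_tail hb)
    rw [List.flatMap_cons]
    rcases Nat.lt_or_ge i 2 with hi | hi
    · interval_cases i <;>
        rcases p with ⟨_|_, _|_⟩ <;> simp_all [pairSteps, count_cons]
    · obtain ⟨j, rfl⟩ : ∃ j, i = j + 2 := ⟨i - 2, by omega⟩
      have hQ := ht j
      rw [take_append, count_append, count_append]
      have hlen : (pairSteps p).length = 2 := pairSteps_length p
      rw [take_of_length_le (by omega)]
      have : j + 2 - (pairSteps p).length = j := by omega
      rw [this]
      rcases p with ⟨_|_, _|_⟩ <;> simp_all [pairSteps, count_cons] <;> omega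

private lemma decode_flatMap : ∀ (m : ℕ) (v : List DyckStep), v.length = 2 * m → ∀ k, Qd k v →
    ∃ l : List (Bool × Bool), l.length = m ∧ v = l.flatMap pairSteps ∧ Bal k l := by
  intro m
  induction m with
  | zero =>
    intro v hv k _
    exact ⟨[], rfl, by simpa using (List.eq_nil_of_length_eq_zero (by omega)), fun t => by simp⟩
  | succ m ih =>
    intro v hv k hQ
    match v, hv with
    | s₁ :: s₂ :: v', hv =>
      have hv' : v'.length = 2 * m := by
        simp only [length_cons] at hv; omega
      set p : Bool × Bool := match s₁, s₂ with
        | U, U => (true, false)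
        | D, D => (false, true)
        | U, D => (false, false)
        | D, U => (true, true) with hp
      have hfp : pairSteps p = [s₁, s₂] := by
        rcases s₁ <;> rcases s₂ <;> rfl
      have hk2 : (if p.2 then 1 else 0 : ℕ) ≤ k + (if p.1 then 1 else 0) := by
        have := hQ 2
        rcases s₁ <;> rcases s₂ <;> simp_all [count_cons] <;> omega
      set k' : ℕ := k + (if p.1 then 1 else 0) - (if p.2 then 1 else 0) with hk'
      have hQ' : Qd k' v' := by
        intro i
        have := hQ (i + 2)
        simp only [take_succ_cons, count_cons] at this
        rcases s₁ <;> rcases s₂ <;> simp_all <;> omega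
      obtain ⟨l', hl'len, hl'eq, hl'bal⟩ := ih v' hv' k' hQ'
      refine ⟨p :: l', by simp [hl'len], by simp [List.flatMap_cons, hfp, hl'eq], ?_⟩
      intro t
      cases t with
      | zero => simp
      | succ t =>
        have := hl'bal t
        simp only [take_succ_cons, countP_cons]
        rcases hp1 : p.1 <;> rcases hp2 : p.2 <;> simp_all <;> try omega

private lemma forall2_countP {n : ℕ} {l₁ l₂ : List (Fin n)}
    (h : List.Forall₂ (· ≤ ·) l₁ l₂) (t : ℕ) :
    l₂.countP (fun a => decide (a.val < t)) ≤ l₁.countP (fun a => decide (a.val < t)) := by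
  induction h with
  | nil => simp
  | cons hxy _ ih =>
    rename_i x y _ _ _
    simp only [countP_cons]
    by_cases hy : y.val < t
    · have : x.val < t := lt_of_le_of_lt hxy hy
      simp [hy, this]; omega
    · simp [hy]; split <;> omega

private lemma countP_forall2 {n : ℕ} : ∀ {l₁ l₂ : List (Fin n)},
    l₁.Pairwise (· < ·) → l₂.Pairwise (· < ·) → l₁.length = l₂.length →
    (∀ t : ℕ, l₂.countP (fun a => decide (a.val < t)) ≤ l₁.countP (fun a => decide (a.val < t))) →
    List.Forall₂ (· ≤ ·) l₁ l₂ := by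
  intro l₁
  induction l₁ with
  | nil => intro l₂ _ _ hl _; rw [eq_nil_of_length_eq_zero hl.symm]; exact Forall₂.nil
  | cons x xs ih =>
    intro l₂ s₁ s₂ hl hc
    cases l₂ with
    | nil => simp at hl
    | cons y ys =>
      have hxy : x ≤ y := by
        by_contra hxy
        push_neg at hxy
        have h1 := hc (x.val)
        have e1 : (x :: xs).countP (fun a => decide (a.val < x.val)) = 0 := by
          rw [countP_eq_zero]
          intro a ha
          rcases mem_cons.1 ha with rfl | ha
          · simp
          · have := (List.pairwise_cons.1 s₁).1 a ha
            simp only [decide_eq_true_eq]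
            omega
        rw [e1, countP_cons] at h1
        have : (y.val < x.val) := hxy
        simp [this] at h1
      refine Forall₂.cons hxy
        (ih (List.pairwise_cons.1 s₁).2 (List.pairwise_cons.1 s₂).2 (by simpa using hl) ?_)
      intro t
      by_cases hty : t ≤ y.val
      · have : ys.countP (fun a => decide (a.val < t)) = 0 := by
          rw [countP_eq_zero]
          intro a ha
          have := (List.pairwise_cons.1 s₂).1 a ha
          simp only [decide_eq_true_eq]
          omega
        omega
      · push_neg at hty
        have h1 := hc t
        have hxt : x.val < t := by have : x.val ≤ y.val := hxy; omega
        simp only [countP_cons, hty, hxt] at h1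
        simp at h1; omega

private lemma take_finRange (n t : ℕ) :
    (List.finRange n).take t = (List.finRange n).filter (fun j => decide (j.val < t)) := by
  induction n generalizing t with
  | zero => simp
  | succ n ih =>
    rw [List.finRange_succ]
    cases t with
    | zero => simp
    | succ t =>
      simp only [take_succ_cons, filter_cons, Fin.val_zero, Nat.zero_lt_succ,
        decide_true]
      congr 1
      rw [← List.map_take, ih t, List.filter_map]
      congr 1
      refine List.filter_congr ?_
      intro a _
      simp [Nat.succ_lt_succ_iff]

private lemma countP_sort {n : ℕ} (X : Finset (Fin n)) (p : Fin n → Bool) :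
    (X.sort (· ≤ ·)).countP p = (X.filter (fun a => p a)).card := by
  classical
  rw [List.Perm.countP_eq _ (Finset.sort_perm_toList X (· ≤ ·))]
  rw [Finset.card_def, Finset.filter_val, ← Multiset.countP_eq_card_filter,
    ← Finset.coe_toList X, Multiset.coe_countP]
  refine List.countP_congr ?_
  intro a _
  simp

private lemma countP_finRange {n : ℕ} (q : Fin n → Bool) :
    (List.finRange n).countP q = (Finset.univ.filter (fun j => q j)).card := by
  classical
  have huniv : (Finset.univ : Finset (Fin n)).val = ↑(List.finRange n) := rfl
  rw [Finset.card_def, Finset.filter_val, ← Multiset.countP_eq_card_filter, huniv,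
    Multiset.coe_countP]
  refine List.countP_congr ?_
  intro a _
  simp

/-- the membership list of a pair of finsets -/
private def memList {n : ℕ} (X Y : Finset (Fin n)) : List (Bool × Bool) :=
  (List.finRange n).map (fun j => (decide (j ∈ X), decide (j ∈ Y)))

private lemma memList_length {n : ℕ} (X Y : Finset (Fin n)) : (memList X Y).length = n := by
  simp [memList]

private lemma countP_take_memList {n : ℕ} (X Y : Finset (Fin n)) (t : ℕ)
    (p : Bool × Bool → Bool) (Z : Finset (Fin n))
    (hp : ∀ j : Fin n, p (decide (j ∈ X), decide (j ∈ Y)) = decide (j ∈ Z)) :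
    ((memList X Y).take t).countP p = (Z.sort (· ≤ ·)).countP (fun a => decide (a.val < t)) := by
  classical
  rw [memList, ← List.map_take, take_finRange, List.countP_map, List.countP_filter]
  rw [countP_sort]
  have : ∀ a : Fin n, ((p ∘ fun j => (decide (j ∈ X), decide (j ∈ Y))) a
      && decide (a.val < t)) = decide (a ∈ Z ∧ a.val < t) := by
    intro a
    simp only [Function.comp, hp a]
    by_cases h1 : a ∈ Z <;> by_cases h2 : a.val < t <;> simp [h1, h2]
  have e : (List.finRange n).countP (fun a =>
        ((p ∘ fun j => (decide (j ∈ X), decide (j ∈ Y))) a && decide (a.val < t))) =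
      (List.finRange n).countP (fun a => decide (a ∈ Z ∧ a.val < t)) :=
    List.countP_congr (fun a _ => by rw [this a])
  rw [e, countP_finRange]
  congr 1
  ext a
  simp
private lemma countP_memList_fst {n : ℕ} (X Y : Finset (Fin n)) :
    (memList X Y).countP (fun q => q.1) = X.card := by
  have h := countP_take_memList X Y n (fun q => q.1) X (fun j => rfl)
  rw [take_of_length_le (by rw [memList_length])] at h
  rw [h, List.countP_eq_length.2 (fun a _ => by simp [a.isLt]), Finset.length_sort]

private lemma countP_memList_snd {n : ℕ} (X Y : Finset (Fin n)) :
    (memList X Y).countP (fun q => q.2) = Y.card := by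
  have h := countP_take_memList X Y n (fun q => q.2) Y (fun j => rfl)
  rw [take_of_length_le (by rw [memList_length])] at h
  rw [h, List.countP_eq_length.2 (fun a _ => by simp [a.isLt]), Finset.length_sort]

private lemma ple_iff {n : ℕ} (X Y : Finset (Fin n)) :
    Ple X Y ↔ X.card = Y.card ∧ Bal 0 (memList X Y) := by
  constructor
  · intro h
    have hlen : X.card = Y.card := by
      rw [← Finset.length_sort (α := Fin n) (· ≤ ·), ← Finset.length_sort (α := Fin n) (· ≤ ·)]
      exact h.length_eq
    refine ⟨hlen, fun t => ?_⟩
    rw [countP_take_memList X Y t (fun q => q.1) X (fun j => rfl),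
      countP_take_memList X Y t (fun q => q.2) Y (fun j => rfl)]
    simpa using forall2_countP h t
  · rintro ⟨h1, h2⟩
    refine countP_forall2 (Finset.sortedLT_sort X).pairwise (Finset.sortedLT_sort Y).pairwise ?_ ?_
    · rw [Finset.length_sort, Finset.length_sort, h1]
    · intro t
      have := h2 t
      rw [countP_take_memList X Y t (fun q => q.1) X (fun j => rfl),
        countP_take_memList X Y t (fun q => q.2) Y (fun j => rfl)] at this
      simpa using this

private lemma count_UD_memList {n : ℕ} {X Y : Finset (Fin n)} (h : X.card = Y.card) :
    ((memList X Y).flatMap pairSteps).count U = ((memList X Y).flatMap pairSteps).count D := by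
  have ht := totals_flatMap (memList X Y)
  rw [countP_memList_fst, countP_memList_snd, h] at ht
  omega

/-- the Dyck word encoding a `Ple` pair -/
private def encW {n : ℕ} (X Y : Finset (Fin n)) (hc : X.card = Y.card)
    (hbal : Bal 0 (memList X Y)) : DyckWord where
  toList := U :: (memList X Y).flatMap pairSteps ++ [D]
  count_U_eq_count_D := by
    have := count_UD_memList (X := X) (Y := Y) hc
    simp [count_cons, count_append, this]
  count_D_le_count_U := by
    intro i
    set mid := (memList X Y).flatMap pairSteps with hmid
    cases i with
    | zero => simp
    | succ i =>
      have hq := encode_Qd (memList X Y) 0 hbal i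
      rw [← hmid] at hq
      simp only [take_succ_cons, cons_append, take_append, count_append,
        count_cons]
      rcases le_or_gt i mid.length with hi | hi
      · have : i - mid.length = 0 := by omega
        rw [this]
        simpa using hq
      · have h1 : take i mid = mid := take_of_length_le (by omega)
        have h2 : take (i - mid.length) [D] = [D] := take_of_length_le (by simp; omega)
        have := count_UD_memList (X := X) (Y := Y) hc
        rw [← hmid] at this
        rw [h1, h2]
        simp [this]

private lemma encW_toList {n : ℕ} (X Y : Finset (Fin n)) (hc) (hbal) :
    (encW X Y hc hbal).toList = U :: (memList X Y).flatMap pairSteps ++ [D] := rfl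

private lemma encW_semilength {n : ℕ} (X Y : Finset (Fin n)) (hc) (hbal) :
    (encW X Y hc hbal).semilength = n + 1 := by
  have h := DyckWord.two_mul_semilength_eq_length (p := encW X Y hc hbal)
  rw [encW_toList, cons_append, length_cons, length_append, length_flatMap_pairSteps,
    memList_length, length_singleton] at h
  omega

private lemma getLast_tail' {α : Type*} : ∀ (v : List α) (hv : v ≠ []) (ht : v.tail ≠ []),
    v.tail.getLast ht = v.getLast hv := by
  intro v hv ht
  cases v with
  | nil => exact absurd rfl hv
  | cons a l => exact (List.getLast_cons ht).symm

private lemma flatMap_pairSteps_inj : ∀ {l l' : List (Bool × Bool)},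
    l.flatMap pairSteps = l'.flatMap pairSteps → l = l' := by
  intro l
  induction l with
  | nil =>
    intro l' h
    have := length_flatMap_pairSteps l'
    rw [← h] at this
    simp only [flatMap_nil, length_nil] at this
    exact (List.length_eq_zero_iff.1 (by omega)).symm
  | cons p l ih =>
    intro l' h
    cases l' with
    | nil =>
      exfalso
      have := length_flatMap_pairSteps (p :: l)
      rw [h] at this
      simp at this
    | cons p' l'' =>
      rw [List.flatMap_cons, List.flatMap_cons] at h
      obtain ⟨h1, h2⟩ := List.append_inj h (by rw [pairSteps_length, pairSteps_length])
      rw [pairSteps_injective h1, ih h2]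

end Helpers

/-- The number of ordered pairs `(X, Y)` of subsets of `[n]` with `X ≤ Y` in `Pₙ`
equals the `(n+1)`-st Catalan number. -/
theorem card_pairs_eq_catalan (n : ℕ) :
    Nat.card {p : Finset (Fin n) × Finset (Fin n) // Ple p.1 p.2} = catalan (n+1) := by
  classical
  set f : {p : Finset (Fin n) × Finset (Fin n) // Ple p.1 p.2} →
      {q : DyckWord // q.semilength = n + 1} := fun s =>
    ⟨encW s.1.1 s.1.2 ((ple_iff s.1.1 s.1.2).1 s.2).1 ((ple_iff s.1.1 s.1.2).1 s.2).2,
      encW_semilength _ _ _ _⟩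
  have hinj : Function.Injective f := by
    rintro ⟨⟨X, Y⟩, h⟩ ⟨⟨X', Y'⟩, h'⟩ he
    have this : U :: (memList X Y).flatMap pairSteps ++ [D]
        = U :: (memList X' Y').flatMap pairSteps ++ [D] := by
      have he2 := congrArg (fun z => (z : { q : DyckWord // q.semilength = n + 1 }).1.toList) he
      simpa only [f, encW_toList] using he2
    rw [cons_append, cons_append, List.cons.injEq] at this
    have hm : memList X Y = memList X' Y' :=
      flatMap_pairSteps_inj (List.append_inj_left this.2 (by
        rw [length_flatMap_pairSteps, length_flatMap_pairSteps, memList_length, memList_length]))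
    have hXY : X = X' ∧ Y = Y' := by
      have hj : ∀ j : Fin n, (decide (j ∈ X), decide (j ∈ Y))
          = (decide (j ∈ X'), decide (j ∈ Y')) := by
        intro j
        simp only [memList] at hm
        exact List.map_inj_left.1 hm j (List.mem_finRange j)
      constructor <;> [skip; skip] <;> ext j <;>
        · have := hj j
          simp only [Prod.mk.injEq, decide_eq_decide] at this
          tauto
    simp [hXY.1, hXY.2]
  have hsurj : Function.Surjective f := by
    rintro ⟨q, hq⟩
    have hlenv : q.toList.length = 2 * (n + 1) := by
      rw [← DyckWord.two_mul_semilength_eq_length, hq]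
    have hne : q.toList ≠ [] := by
      intro h; rw [h] at hlenv; simp at hlenv
    have htailne : q.toList.tail ≠ [] := by
      intro h
      have := congrArg List.length h
      rw [List.length_tail] at this
      simp at this
      omega
    set mid := q.toList.tail.dropLast with hmiddef
    have hv : q.toList = U :: mid ++ [D] := by
      conv_lhs => rw [← List.cons_head_tail hne]
      rw [q.head_eq_U hne]
      congr 1
      conv_lhs => rw [← List.dropLast_append_getLast htailne]
      congr 1
      rw [getLast_tail' q.toList hne htailne, q.getLast_eq_D hne]
    have hmidlen : mid.length = 2 * n := by
      have := congrArg List.length hv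
      rw [length_append, length_cons, length_singleton] at this
      omega
    have hQd : Qd 0 mid := by
      intro i
      have hc := q.count_D_le_count_U (i + 1)
      rw [hv] at hc
      rw [cons_append, take_succ_cons, count_cons, count_cons,
        take_append, count_append, count_append] at hc
      have hU0 : (take (i - mid.length) [D]).count U = 0 := by
        have := (List.take_sublist (i - mid.length) [D]).count_le U
        simpa using this
      rw [hU0] at hc
      simp at hc
      omega
    obtain ⟨l, hllen, hleq, hbal⟩ := decode_flatMap n mid hmidlen 0 hQd
    set X : Finset (Fin n) :=
      Finset.univ.filter (fun j => (l.get (Fin.cast hllen.symm j)).1 = true) with hX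
    set Y : Finset (Fin n) :=
      Finset.univ.filter (fun j => (l.get (Fin.cast hllen.symm j)).2 = true) with hY
    have hgX : ∀ j : Fin n, decide (j ∈ X) = (l.get (Fin.cast hllen.symm j)).1 := by
      intro j; rw [hX]; simp
    have hgY : ∀ j : Fin n, decide (j ∈ Y) = (l.get (Fin.cast hllen.symm j)).2 := by
      intro j; rw [hY]; simp
    have hml : memList X Y = l := by
      refine List.ext_getElem (by rw [memList_length, hllen]) ?_
      intro i h1 h2
      rw [memList_length] at h1
      simp only [memList, List.getElem_map, List.getElem_finRange]
      rw [hgX, hgY]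
      simp [List.get_eq_getElem, Fin.cast]
    have hUDmid : mid.count U = mid.count D := by
      have hc := q.count_U_eq_count_D
      rw [hv] at hc
      simp [count_cons, count_append] at hc
      omega
    have hcard : X.card = Y.card := by
      have ht := totals_flatMap l
      rw [← hleq, hUDmid] at ht
      have h1 := countP_memList_fst X Y
      have h2 := countP_memList_snd X Y
      rw [hml] at h1 h2
      omega
    have hbal' : Bal 0 (memList X Y) := by rw [hml]; exact hbal
    have hPle : Ple X Y := (ple_iff X Y).2 ⟨hcard, hbal'⟩
    refine ⟨⟨(X, Y), hPle⟩, ?_⟩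
    apply Subtype.ext
    apply DyckWord.ext
    show U :: (memList X Y).flatMap pairSteps ++ [D] = q.toList
    rw [hml, ← hleq, hv]
  rw [Nat.card_eq_of_bijective f ⟨hinj, hsurj⟩, Nat.card_eq_fintype_card,
    DyckWord.card_dyckWord_semilength_eq_catalan]
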